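/- Let n ≥ 2 be an integer, let μ be a measure on a measurable space, let Ω′ be a measurable set with μ(Ω′) < ∞, and let φ : Ω′ → [−∞, 0] be a measurable function. Let A, B, c, δ, C > 0 be constants such that: (i) for all t > 0, μ({x ∈ Ω′ : φ(x) < −t}) ≤ C · δ^{2n} · (1 + t^{(n+1)/n} A^{−1/n})^{n−1} · e^{−2n · t^{(n+1)/n} A^{−1/n}}; and (ii) ∫_{Ω′} e^{−2cφ} dμ ≤ B. Then for every λ with c < λ < (n+1)c/n one has ∫_{Ω′} e^{−2λφ} dμ ≤ μ(Ω′) + 2λ · [ (B/(2(λ−c))) · e^{2(λ−c) A cⁿ n^{−n}} + (1/2) · C δ^{2n} · (1 + 2^{n+1} A λ^{n+1} n^{−n−1})^{n−1} · ((n+1)c/n − λ)^{−1} · e^{2(λ−c) A cⁿ n^{−n}} + C δ^{2n} · (n² / (λ(n+2))) · ∫₀^{∞} (1+2x)^{n−1} e^{−2nx} dx ]. -/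

import Mathlib

open MeasureTheory ENNReal Set

lemma myExpInt1 (k T : ℝ) (hk : 0 < k) (hT : 0 ≤ T) :
    ∫ t in Set.Ioo (0:ℝ) T, Real.exp (k*t) = (Real.exp (k*T) - 1)/k := by
  rw [← integral_Ioc_eq_integral_Ioo, ← intervalIntegral.integral_of_le hT]
  have hd : ∀ t ∈ Set.uIcc (0:ℝ) T, HasDerivAt (fun s => Real.exp (k*s)/k) (Real.exp (k*t)) t := by
    intro t _
    have h1 : HasDerivAt (fun s : ℝ => k*s) k t := by
      simpa using (hasDerivAt_id t).const_mul k
    have h2 := (Real.hasDerivAt_exp (k*t)).comp t h1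
    have h3 := h2.div_const k
    simpa [mul_comm, mul_div_assoc, mul_div_cancel_left₀ _ hk.ne'] using h3
  have := intervalIntegral.integral_eq_sub_of_hasDerivAt hd
    ((Real.continuous_exp.comp (continuous_const.mul continuous_id)).intervalIntegrable 0 T)
  rw [this]
  simp [sub_div]

lemma myExpInt2 (k b : ℝ) (hk : 0 < k) :
    (∫ t in Set.Ioi b, Real.exp (-(k*(t-b)))) = 1/k ∧
      IntegrableOn (fun t => Real.exp (-(k*(t-b)))) (Set.Ioi b) := by
  have hint : IntegrableOn (fun t => Real.exp (-(k*(t-b)))) (Set.Ioi b) := by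
    have h := (exp_neg_integrableOn_Ioi b hk).const_mul (Real.exp (k*b))
    refine h.congr (Filter.Eventually.of_forall (fun t => ?_))
    show Real.exp (k*b) * Real.exp (-k*t) = _
    rw [← Real.exp_add]; ring_nf
  refine ⟨?_, hint⟩
  have hderiv : ∀ t ∈ Set.Ici b, HasDerivAt (fun s => -(Real.exp (-(k*(s-b)))/k))
      (Real.exp (-(k*(t-b)))) t := by
    intro t _
    have h1 : HasDerivAt (fun s : ℝ => -(k*(s-b))) (-k) t := by
      exact (((hasDerivAt_id t).sub_const b).const_mul k).neg.congr_deriv (by ring)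
    have h2 := (Real.hasDerivAt_exp (-(k*(t-b)))).comp t h1
    have h3 := (h2.div_const k).neg
    have : -(Real.exp (-(k * (t - b))) * -k / k) = Real.exp (-(k*(t-b))) := by
      field_simp
    rwa [this] at h3
  have htend : Filter.Tendsto (fun t => -(Real.exp (-(k*(t-b)))/k)) Filter.atTop (nhds 0) := by
    have h1 : Filter.Tendsto (fun t : ℝ => k*(t-b)) Filter.atTop Filter.atTop := by
      exact Filter.Tendsto.const_mul_atTop hk (Filter.tendsto_atTop_add_const_right _ (-b)
        Filter.tendsto_id |>.congr (fun x => by simp [sub_eq_add_neg, add_comm]))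
    have h2 := (Real.tendsto_exp_neg_atTop_nhds_zero).comp h1
    have h3 := (h2.div_const k).neg
    simpa using h3
  have := integral_Ioi_of_hasDerivAt_of_tendsto' hderiv hint htend
  rw [this]; simp [hk.ne']

lemma myTangent {p t₁ t : ℝ} (hp : 1 ≤ p) (h1 : 0 < t₁) (h : t₁ ≤ t) :
    t₁^p + p*t₁^(p-1)*(t-t₁) ≤ t^p := by
  have hs : (0:ℝ) ≤ (t-t₁)/t₁ := div_nonneg (by linarith) h1.le
  have hb := one_add_mul_self_le_rpow_one_add (by linarith : (-1:ℝ) ≤ (t-t₁)/t₁) hp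
  have ht : t = t₁ * (1 + (t-t₁)/t₁) := by field_simp; ring
  have hrw : t^p = t₁^p * (1 + (t-t₁)/t₁)^p := by
    nth_rewrite 1 [ht]
    rw [Real.mul_rpow h1.le (by linarith)]
  rw [hrw]
  have h2 : t₁^p * (1 + p*((t-t₁)/t₁)) ≤ t₁^p * (1 + (t-t₁)/t₁)^p := by
    exact mul_le_mul_of_nonneg_left hb (Real.rpow_nonneg h1.le p)
  refine le_trans (le_of_eq ?_) h2
  have h3 : t₁^p = t₁^(p-1) * t₁ := by
    rw [← Real.rpow_add_one h1.ne' (p-1)]; ring_nf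
  have h4 : t₁ * ((t-t₁)/t₁) = t - t₁ := by field_simp
  rw [h3]
  linear_combination (-(p*t₁^(p-1))) * h4

lemma myMeasExp {α : Type*} [MeasurableSpace α] (c' : ℝ) {φ : α → EReal} (hφ : Measurable φ) :
    Measurable fun x => EReal.exp ((c' : EReal) * φ x) := by
  have h : Measurable fun y : EReal => EReal.exp ((c' : EReal) * y) := by
    apply EReal.measurable_of_measurable_real
    have : (fun p : ℝ => EReal.exp ((c' : EReal) * (p : EReal)))
        = fun p : ℝ => ENNReal.ofReal (Real.exp (c' * p)) := by
      funext p; rw [← EReal.coe_mul, EReal.exp_coe]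
    rw [this]
    exact (Real.measurable_exp.comp (measurable_id.const_mul c')).ennreal_ofReal
  exact h.comp hφ

lemma myPointwise (l : ℝ) (hl : 0 < l) (y : EReal) (hy : y ≤ 0) :
    EReal.exp ((↑(-(2*l)) : EReal) * y) =
      1 + ∫⁻ t in Set.Ioi (0:ℝ), ENNReal.ofReal (2*l*Real.exp (2*l*t)) *
        Set.indicator {s : ℝ | y < ((-s : ℝ) : EReal)} (fun _ => (1:ℝ≥0∞)) t := by
  induction y with
  | bot =>
    rw [EReal.coe_mul_bot_of_neg (by linarith), EReal.exp_top]
    have hset : {s : ℝ | (⊥:EReal) < ((-s : ℝ) : EReal)} = Set.univ := by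
      ext s; simp only [Set.mem_setOf_eq, Set.mem_univ, iff_true]; exact EReal.bot_lt_coe _
    rw [hset]
    simp only [Set.indicator_univ, mul_one]
    have hge : ∫⁻ t in Set.Ioi (0:ℝ), ENNReal.ofReal (2*l) ≤
        ∫⁻ t in Set.Ioi (0:ℝ), ENNReal.ofReal (2*l*Real.exp (2*l*t)) := by
      refine setLIntegral_mono' measurableSet_Ioi (fun t ht => ?_)
      refine ENNReal.ofReal_le_ofReal ?_
      nlinarith [Real.one_le_exp (by nlinarith [le_of_lt (Set.mem_Ioi.1 ht)] : (0:ℝ) ≤ 2*l*t)]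
    rw [setLIntegral_const, Real.volume_Ioi, ENNReal.mul_top
      (ENNReal.ofReal_pos.2 (by linarith)).ne'] at hge
    rw [eq_comm, eq_top_iff]
    exact le_trans hge le_add_self
  | coe r =>
    have hr : r ≤ 0 := by exact_mod_cast hy
    have hset : {s : ℝ | ((r:ℝ):EReal) < ((-s : ℝ) : EReal)} = Set.Iio (-r) := by
      ext s
      simp only [Set.mem_setOf_eq, Set.mem_Iio, ← EReal.coe_neg, EReal.coe_lt_coe_iff]
      constructor <;> intro h <;> linarith
    rw [hset]
    have hind : ∀ t : ℝ, ENNReal.ofReal (2*l*Real.exp (2*l*t)) *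
        Set.indicator (Set.Iio (-r)) (fun _ => (1:ℝ≥0∞)) t =
        Set.indicator (Set.Iio (-r)) (fun t => ENNReal.ofReal (2*l*Real.exp (2*l*t))) t := by
      intro t; by_cases h : t ∈ Set.Iio (-r) <;> simp [h]
    rw [lintegral_congr hind, lintegral_indicator measurableSet_Iio,
      Measure.restrict_restrict measurableSet_Iio]
    have : Set.Iio (-r) ∩ Set.Ioi 0 = Set.Ioo (0:ℝ) (-r) := by
      rw [Set.inter_comm, Set.Ioi_inter_Iio]
    rw [this]
    have hnn : ∀ᵐ t ∂(volume.restrict (Set.Ioo (0:ℝ) (-r))), 0 ≤ 2*l*Real.exp (2*l*t) := by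
      refine Filter.Eventually.of_forall (fun t => ?_)
      positivity
    have hinte : IntegrableOn (fun t => 2*l*Real.exp (2*l*t)) (Set.Ioo (0:ℝ) (-r)) := by
      refine (continuous_const.mul
        (Real.continuous_exp.comp (continuous_const.mul continuous_id))).integrableOn_Icc.mono_set
        Set.Ioo_subset_Icc_self
    rw [← ofReal_integral_eq_lintegral_ofReal hinte hnn]
    rw [MeasureTheory.integral_const_mul, myExpInt1 (2*l) (-r) (by linarith) (by linarith)]
    have hcalc : 2*l*((Real.exp (2*l*(-r)) - 1)/(2*l)) = Real.exp (2*l*(-r)) - 1 := by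
      field_simp
    rw [hcalc]
    have h1 : (1:ℝ≥0∞) = ENNReal.ofReal 1 := by simp
    rw [h1, ← ENNReal.ofReal_add (by norm_num)
      (by nlinarith [Real.one_le_exp (by nlinarith : (0:ℝ) ≤ 2*l*(-r))] : (0:ℝ) ≤ Real.exp (2*l*(-r)) - 1)]
    rw [← EReal.coe_mul, EReal.exp_coe]
    congr 1
    ring_nf
  | top => simp at hy
lemma myLayercake {α : Type*} [MeasurableSpace α] (μ : MeasureTheory.Measure α) (Ω' : Set α)
    (hΩ'meas : MeasurableSet Ω') (hΩ' : μ Ω' < ⊤) (φ : α → EReal) (hφmeas : Measurable φ)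
    (hφneg : ∀ x ∈ Ω', φ x ≤ 0) (l : ℝ) (hl : 0 < l) :
    ∫⁻ x in Ω', EReal.exp ((↑(-(2 * l)) : EReal) * φ x) ∂μ =
      μ Ω' + ∫⁻ t in Set.Ioi (0:ℝ), ENNReal.ofReal (2*l*Real.exp (2*l*t)) *
        μ {x | x ∈ Ω' ∧ φ x < ((-t : ℝ) : EReal)} := by
  classical
  set f : α → ℝ → ℝ≥0∞ := fun x t => ENNReal.ofReal (2*l*Real.exp (2*l*t)) *
    Set.indicator {s : ℝ | φ x < ((-s:ℝ):EReal)} (fun _ => (1:ℝ≥0∞)) t with hf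
  have step1 : ∫⁻ x in Ω', EReal.exp ((↑(-(2 * l)) : EReal) * φ x) ∂μ =
      ∫⁻ x in Ω', (1 + ∫⁻ t in Set.Ioi (0:ℝ), f x t) ∂μ := by
    refine setLIntegral_congr_fun hΩ'meas (fun x hx => ?_)
    exact myPointwise l hl (φ x) (hφneg x hx)
  rw [step1]
  haveI : MeasureTheory.IsFiniteMeasure (μ.restrict Ω') :=
    ⟨by rwa [MeasureTheory.Measure.restrict_apply_univ]⟩
  have hS' : MeasurableSet {p : α × ℝ | φ p.1 < ((-p.2 : ℝ) : EReal)} := by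
    exact measurableSet_lt (hφmeas.comp measurable_fst) ((measurable_snd.neg).coe_real_ereal)
  have huncurry : Function.uncurry f = fun p : α × ℝ =>
      ENNReal.ofReal (2*l*Real.exp (2*l*p.2)) *
        Set.indicator {p : α × ℝ | φ p.1 < ((-p.2 : ℝ) : EReal)} (fun _ => (1:ℝ≥0∞)) p := by
    funext p
    by_cases h : φ p.1 < ((-p.2 : ℝ) : EReal) <;>
      simp [hf, Function.uncurry, Set.indicator_apply, h]
  have hmeas_unc : Measurable (Function.uncurry f) := by
    rw [huncurry]
    exact ((Real.measurable_exp.comp (measurable_snd.const_mul (2*l))).const_mul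
      (2*l)).ennreal_ofReal.mul (measurable_const.indicator hS')
  have step2 : ∫⁻ x in Ω', (1 + ∫⁻ t in Set.Ioi (0:ℝ), f x t) ∂μ =
      μ Ω' + ∫⁻ x in Ω', ∫⁻ t in Set.Ioi (0:ℝ), f x t ∂(volume) ∂μ := by
    rw [lintegral_add_left measurable_const, setLIntegral_one]
  rw [step2]
  have step3 : ∫⁻ x in Ω', ∫⁻ t in Set.Ioi (0:ℝ), f x t ∂(volume) ∂μ =
      ∫⁻ t in Set.Ioi (0:ℝ), ∫⁻ x in Ω', f x t ∂μ ∂(volume) := by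
    exact MeasureTheory.lintegral_lintegral_swap hmeas_unc.aemeasurable
  rw [step3]
  congr 1
  refine lintegral_congr (fun t => ?_)
  have hsetX : MeasurableSet {x : α | φ x < ((-t:ℝ):EReal)} :=
    measurableSet_lt hφmeas measurable_const
  have hswap : ∀ x : α, f x t = ENNReal.ofReal (2*l*Real.exp (2*l*t)) *
      Set.indicator {x : α | φ x < ((-t:ℝ):EReal)} (fun _ => (1:ℝ≥0∞)) x := by
    intro x
    by_cases h : φ x < ((-t:ℝ):EReal) <;> simp [hf, Set.indicator_apply, h]
  rw [lintegral_congr hswap, lintegral_const_mul' _ _ ENNReal.ofReal_ne_top]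
  congr 1
  rw [lintegral_indicator hsetX, setLIntegral_one, MeasureTheory.Measure.restrict_apply hsetX]
  congr 1
  ext x; simp [and_comm]
lemma myLintegralImage {s : Set ℝ} {F F' : ℝ → ℝ} (hs : MeasurableSet s)
    (hF' : ∀ x ∈ s, HasDerivWithinAt F (F' x) s x) (hF : Set.InjOn F s) (g : ℝ → ℝ≥0∞) :
    ∫⁻ x in F '' s, g x = ∫⁻ x in s, ENNReal.ofReal |F' x| * g (F x) := by
  simpa only [ContinuousLinearMap.det_toSpanSingleton] using
    MeasureTheory.lintegral_image_eq_lintegral_abs_det_fderiv_mul volume hs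
      (fun x hx => (hF' x hx).hasFDerivWithinAt) hF g
set_option maxHeartbeats 1000000 in
/-- Measure-theoretic content of Lemma 2.4 of the paper: if `μ(Ω′) < ∞`,
`φ : Ω′ → [−∞, 0]` is measurable, `μ({φ < −t} ∩ Ω′)` satisfies the sublevel-set bound (i)
and `∫_{Ω′} e^{−2cφ} dμ ≤ B` (ii), then for every `c < λ < (n+1)c/n` the weighted integral
`∫_{Ω′} e^{−2λφ} dμ` satisfies the stated explicit bound. -/
theorem weighted_integral_bound {α : Type*} [MeasurableSpace α] (μ : Measure α)
    (n : ℕ) (hn : 2 ≤ n) (Ω' : Set α) (hΩ'meas : MeasurableSet Ω') (hΩ' : μ Ω' < ⊤)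
    (φ : α → EReal) (hφmeas : Measurable φ) (hφneg : ∀ x ∈ Ω', φ x ≤ 0)
    (A B c δ C : ℝ) (hA : 0 < A) (hB : 0 < B) (hc : 0 < c) (hδ : 0 < δ) (hC : 0 < C)
    (hsublevel : ∀ t : ℝ, 0 < t →
      μ {x | x ∈ Ω' ∧ φ x < ((-t : ℝ) : EReal)} ≤
        ENNReal.ofReal (C * δ ^ (2 * n) *
          (1 + t ^ (((n : ℝ) + 1) / n) * A ^ (-1 / (n : ℝ))) ^ (n - 1) *
          Real.exp (-(2 * n) * (t ^ (((n : ℝ) + 1) / n) * A ^ (-1 / (n : ℝ))))))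
    (hint : ∫⁻ x in Ω', EReal.exp ((↑(-(2 * c)) : EReal) * φ x) ∂μ ≤ ENNReal.ofReal B) :
    ∀ l : ℝ, c < l → l < ((n : ℝ) + 1) * c / n →
      ∫⁻ x in Ω', EReal.exp ((↑(-(2 * l)) : EReal) * φ x) ∂μ ≤
        μ Ω' + ENNReal.ofReal (2 * l *
          (B / (2 * (l - c)) * Real.exp (2 * (l - c) * A * c ^ n / (n : ℝ) ^ n) +
            (1 / 2) * C * δ ^ (2 * n) *
              (1 + 2 ^ (n + 1) * A * l ^ (n + 1) / (n : ℝ) ^ (n + 1)) ^ (n - 1) *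
              (((n : ℝ) + 1) * c / n - l)⁻¹ *
              Real.exp (2 * (l - c) * A * c ^ n / (n : ℝ) ^ n) +
            C * δ ^ (2 * n) * ((n : ℝ) ^ 2 / (l * ((n : ℝ) + 2))) *
              ∫ x in Set.Ioi (0 : ℝ), (1 + 2 * x) ^ (n - 1) * Real.exp (-(2 * n) * x))) := by
  intro l hl1 hl2
  have hn0 : (0:ℝ) < (n:ℝ) := by exact_mod_cast Nat.pos_of_ne_zero (by omega)
  have hnne : (n:ℝ) ≠ 0 := hn0.ne'
  have hl0 : 0 < l := hc.trans hl1
  -- abbreviations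
  set p : ℝ := ((n:ℝ)+1)/(n:ℝ) with hpdef
  set a : ℝ := A ^ (-1/(n:ℝ)) with hadef
  have ha : 0 < a := Real.rpow_pos_of_pos hA _
  set X : ℝ → ℝ := fun t => t ^ p * a with hXdef
  have hp1 : 1 < p := (one_lt_div hn0).2 (by linarith)
  have hpm : p - 1 = 1/(n:ℝ) := by
    rw [hpdef]; field_simp; ring
  have hpsum : p = 1 + 1/(n:ℝ) := by rw [hpdef]; field_simp
  set t₁ : ℝ := A*c^n/(n:ℝ)^n with ht₁def
  set t₂ : ℝ := 2^n*A*l^n/(n:ℝ)^n with ht₂def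
  have ht₁ : 0 < t₁ := by positivity
  have ht₂ : 0 < t₂ := by positivity
  have ht₁₂ : t₁ < t₂ := by
    have hcl : c^n < l^n := pow_lt_pow_left₀ hl1 hc.le (by omega)
    have h2n : (1:ℝ) ≤ 2^n := by
      have := pow_le_pow_left₀ (by norm_num : (0:ℝ) ≤ 1) (by norm_num : (1:ℝ) ≤ 2) n
      simpa using this
    rw [ht₁def, ht₂def]
    have h1 : A*c^n < A*l^n := by exact mul_lt_mul_of_pos_left hcl hA
    have h2 : A*l^n ≤ 2^n*A*l^n := by nlinarith [mul_pos hA (pow_pos hl0 n)]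
    apply div_lt_div_of_pos_right ?_ (by positivity)
    linarith
  have hκ : 0 < ((n:ℝ)+1)*c/(n:ℝ) - l := by linarith
  set κ : ℝ := ((n:ℝ)+1)*c/(n:ℝ) - l with hκdef
  -- root identities
  have hroot : ∀ b : ℝ, 0 < b → (A*(b/(n:ℝ))^n) ^ (1/(n:ℝ)) * a = b/(n:ℝ) := by
    intro b hb
    have hbn : (0:ℝ) ≤ b/(n:ℝ) := by positivity
    rw [Real.mul_rpow hA.le (by positivity), ← Real.rpow_natCast (b/(n:ℝ)) n,
      ← Real.rpow_mul hbn, mul_one_div_cancel hnne, Real.rpow_one, hadef]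
    have hAa : A ^ (1/(n:ℝ)) * A ^ (-1/(n:ℝ)) = 1 := by
      rw [← Real.rpow_add hA, show (1:ℝ)/(n:ℝ) + -1/(n:ℝ) = 0 by ring, Real.rpow_zero]
    calc A ^ (1/(n:ℝ)) * (b/(n:ℝ)) * A ^ (-1/(n:ℝ))
        = (A ^ (1/(n:ℝ)) * A ^ (-1/(n:ℝ))) * (b/(n:ℝ)) := by ring
      _ = b/(n:ℝ) := by rw [hAa, one_mul]
  have hu₁ : t₁ ^ (1/(n:ℝ)) * a = c/(n:ℝ) := by
    have : t₁ = A*(c/(n:ℝ))^n := by rw [ht₁def, div_pow]; ring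
    rw [this]; exact hroot c hc
  have hu₂ : t₂ ^ (1/(n:ℝ)) * a = 2*l/(n:ℝ) := by
    have : t₂ = A*((2*l)/(n:ℝ))^n := by rw [ht₂def, div_pow, mul_pow]; ring
    rw [this]; exact hroot (2*l) (by linarith)
  have hXsplit : ∀ t : ℝ, 0 < t → X t = t * (t ^ (1/(n:ℝ)) * a) := by
    intro t ht
    rw [hXdef]
    simp only
    rw [hpsum, Real.rpow_add ht, Real.rpow_one]; ring
  -- exponent inequality on [t₁, ∞)
  have hexp : ∀ t : ℝ, t₁ ≤ t → 2*l*t - 2*(n:ℝ)*X t ≤ 2*(l-c)*t₁ - 2*κ*(t-t₁) := by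
    intro t h1
    have htan := myTangent hp1.le ht₁ h1
    have hmul := mul_le_mul_of_nonneg_left htan (by positivity : (0:ℝ) ≤ (n:ℝ)*a)
    have hid1 : (n:ℝ)*a*t₁^p = c*t₁ := by
      rw [hpsum, Real.rpow_add ht₁, Real.rpow_one]
      have : (n:ℝ)*a*(t₁*t₁^(1/(n:ℝ))) = (n:ℝ)*(t₁^(1/(n:ℝ))*a)*t₁ := by ring
      rw [this, hu₁]; field_simp
    have hid2 : (n:ℝ)*a*(p*t₁^(p-1)) = κ + l := by
      rw [hpm]
      have : (n:ℝ)*a*(p*t₁^(1/(n:ℝ))) = (n:ℝ)*p*(t₁^(1/(n:ℝ))*a) := by ring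
      rw [this, hu₁, hκdef, hpdef]
      field_simp
      ring
    have hX : X t = t^p * a := rfl
    nlinarith [hmul, hid1, hid2]
  -- Chebyshev bound
  have hcheb : ∀ t : ℝ, 0 < t → μ {x | x ∈ Ω' ∧ φ x < ((-t : ℝ) : EReal)} ≤
      ENNReal.ofReal (B * Real.exp (-(2*c*t))) := by
    intro t ht
    set S : Set α := {x | x ∈ Ω' ∧ φ x < ((-t : ℝ) : EReal)} with hSdef
    have hSsub : S ⊆ Ω' := fun x hx => hx.1
    have hkey : ENNReal.ofReal (Real.exp (2*c*t)) * μ S ≤ ENNReal.ofReal B := by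
      calc ENNReal.ofReal (Real.exp (2*c*t)) * μ S
          = ∫⁻ _ in S, ENNReal.ofReal (Real.exp (2*c*t)) ∂μ := (setLIntegral_const _ _).symm
        _ ≤ ∫⁻ x in S, EReal.exp ((↑(-(2 * c)) : EReal) * φ x) ∂μ := by
            refine setLIntegral_mono (myMeasExp (-(2*c)) hφmeas) (fun x hx => ?_)
            have hφx : φ x < ((-t : ℝ) : EReal) := hx.2
            rw [← EReal.exp_coe]
            apply EReal.exp_monotone
            set y := φ x with hy
            clear_value y
            induction y with
            | bot => rw [EReal.coe_mul_bot_of_neg (by linarith)]; exact le_top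
            | coe r =>
              have hr : r < -t := by exact_mod_cast hφx
              rw [← EReal.coe_mul, EReal.coe_le_coe_iff]
              nlinarith
            | top => exact absurd hφx (by simp)
        _ ≤ ∫⁻ x in Ω', EReal.exp ((↑(-(2 * c)) : EReal) * φ x) ∂μ := lintegral_mono_set hSsub
        _ ≤ ENNReal.ofReal B := hint
    have h2 : μ S ≤ ENNReal.ofReal B / ENNReal.ofReal (Real.exp (2*c*t)) := by
      rw [ENNReal.le_div_iff_mul_le (Or.inl ?_) (Or.inl ENNReal.ofReal_ne_top)]
      · rwa [mul_comm]
      · exact (ENNReal.ofReal_pos.2 (Real.exp_pos _)).ne'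
    refine h2.trans (le_of_eq ?_)
    rw [← ENNReal.ofReal_div_of_pos (Real.exp_pos _)]
    congr 1
    rw [Real.exp_neg, div_eq_mul_inv]
  -- layer cake
  rw [myLayercake μ Ω' hΩ'meas hΩ' φ hφmeas hφneg l hl0]
  apply add_le_add_right
  -- split the domain
  have hsplit : Set.Ioi (0:ℝ) = (Set.Ioc 0 t₁ ∪ Set.Ioc t₁ t₂) ∪ Set.Ioi t₂ := by
    rw [Set.Ioc_union_Ioc_eq_Ioc ht₁.le ht₁₂.le, Set.Ioc_union_Ioi_eq_Ioi ht₂.le]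
  have hlc : (0:ℝ) < l - c := by linarith
  have harg : 2*(l-c)*A*c^n/(n:ℝ)^n = 2*(l-c)*t₁ := by rw [ht₁def]; ring
  -- facts about X
  have hXt₂ : X t₂ = 2^(n+1)*A*l^(n+1)/(n:ℝ)^(n+1) := by
    rw [hXsplit t₂ ht₂, hu₂, ht₂def]
    field_simp
    ring
  have hXbound : ∀ t : ℝ, 0 ≤ t → t ≤ t₂ → X t ≤ 2^(n+1)*A*l^(n+1)/(n:ℝ)^(n+1) := by
    intro t h0 h2
    rw [← hXt₂, hXdef]
    exact mul_le_mul_of_nonneg_right (Real.rpow_le_rpow h0 h2 (by positivity)) ha.le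
  have hXge : ∀ t : ℝ, t₂ ≤ t → 2*l/(n:ℝ)*t ≤ X t := by
    intro t h2
    have ht0 : 0 < t := lt_of_lt_of_le ht₂ h2
    rw [hXsplit t ht0]
    have h3 : 2*l/(n:ℝ) ≤ t ^ (1/(n:ℝ)) * a := by
      rw [← hu₂]
      exact mul_le_mul_of_nonneg_right (Real.rpow_le_rpow ht₂.le h2 (by positivity)) ha.le
    calc 2*l/(n:ℝ)*t = t * (2*l/(n:ℝ)) := by ring
      _ ≤ t * (t ^ (1/(n:ℝ)) * a) := mul_le_mul_of_nonneg_left h3 ht0.le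
  have hP₂base : (0:ℝ) ≤ 2^(n+1)*A*l^(n+1)/(n:ℝ)^(n+1) := by positivity
  -- Bound 1
  have hb1 : ∫⁻ t in Set.Ioc 0 t₁,
      ENNReal.ofReal (2*l*Real.exp (2*l*t)) * μ {x | x ∈ Ω' ∧ φ x < ((-t : ℝ) : EReal)} ≤
      ENNReal.ofReal (2 * l * (B / (2 * (l - c)) *
        Real.exp (2 * (l - c) * A * c ^ n / (n : ℝ) ^ n))) := by
    have hk : (0:ℝ) < 2*(l-c) := by linarith
    calc ∫⁻ t in Set.Ioc 0 t₁,
        ENNReal.ofReal (2*l*Real.exp (2*l*t)) * μ {x | x ∈ Ω' ∧ φ x < ((-t : ℝ) : EReal)}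
        ≤ ∫⁻ t in Set.Ioc 0 t₁, ENNReal.ofReal (2*l*B*Real.exp (2*(l-c)*t)) := by
          refine setLIntegral_mono' measurableSet_Ioc (fun t ht => ?_)
          calc ENNReal.ofReal (2*l*Real.exp (2*l*t)) * μ {x | x ∈ Ω' ∧ φ x < ((-t : ℝ) : EReal)}
              ≤ ENNReal.ofReal (2*l*Real.exp (2*l*t)) * ENNReal.ofReal (B*Real.exp (-(2*c*t))) :=
                mul_le_mul_right (hcheb t ht.1) _
            _ = ENNReal.ofReal (2*l*Real.exp (2*l*t)*(B*Real.exp (-(2*c*t)))) :=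
                (ENNReal.ofReal_mul (by positivity)).symm
            _ = ENNReal.ofReal (2*l*B*Real.exp (2*(l-c)*t)) := by
                rw [show 2*(l-c)*t = 2*l*t + -(2*c*t) by ring, Real.exp_add]; ring_nf
      _ = ENNReal.ofReal (∫ t in Set.Ioc 0 t₁, 2*l*B*Real.exp (2*(l-c)*t)) := by
          rw [ofReal_integral_eq_lintegral_ofReal]
          · exact ((continuous_const.mul (Real.continuous_exp.comp
              (continuous_const.mul continuous_id))).integrableOn_Icc).mono_set
              Set.Ioc_subset_Icc_self
          · exact Filter.Eventually.of_forall (fun t => by positivity)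
      _ ≤ ENNReal.ofReal (2 * l * (B / (2 * (l - c)) *
          Real.exp (2 * (l - c) * A * c ^ n / (n : ℝ) ^ n))) := by
          apply ENNReal.ofReal_le_ofReal
          rw [harg, MeasureTheory.integral_Ioc_eq_integral_Ioo, MeasureTheory.integral_const_mul,
            myExpInt1 (2*(l-c)) t₁ hk ht₁.le]
          have hep := Real.exp_pos (2*(l-c)*t₁)
          rw [show 2*l*(B/(2*(l-c))*Real.exp (2*(l-c)*t₁))
            = 2*l*B*((Real.exp (2*(l-c)*t₁))/(2*(l-c))) by field_simp]
          have h2 : (Real.exp (2*(l-c)*t₁) - 1)/(2*(l-c)) ≤ Real.exp (2*(l-c)*t₁)/(2*(l-c)) := by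
            gcongr
            linarith
          have h3 : (0:ℝ) ≤ 2*l*B := by positivity
          exact mul_le_mul_of_nonneg_left h2 h3
  -- Bound 2
  have hb2 : ∫⁻ t in Set.Ioc t₁ t₂,
      ENNReal.ofReal (2*l*Real.exp (2*l*t)) * μ {x | x ∈ Ω' ∧ φ x < ((-t : ℝ) : EReal)} ≤
      ENNReal.ofReal (2 * l * (1 / 2 * C * δ ^ (2 * n) *
        (1 + 2 ^ (n + 1) * A * l ^ (n + 1) / (n : ℝ) ^ (n + 1)) ^ (n - 1) *
        (((n : ℝ) + 1) * c / n - l)⁻¹ *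
        Real.exp (2 * (l - c) * A * c ^ n / (n : ℝ) ^ n))) := by
    set K : ℝ := 2*l*(C*δ^(2*n))*(1 + 2^(n+1)*A*l^(n+1)/(n:ℝ)^(n+1))^(n-1)*
      Real.exp (2*(l-c)*t₁) with hKdef
    have hκ2 : (0:ℝ) < 2*κ := by linarith
    calc ∫⁻ t in Set.Ioc t₁ t₂,
        ENNReal.ofReal (2*l*Real.exp (2*l*t)) * μ {x | x ∈ Ω' ∧ φ x < ((-t : ℝ) : EReal)}
        ≤ ∫⁻ t in Set.Ioc t₁ t₂, ENNReal.ofReal (K*Real.exp (-(2*κ*(t-t₁)))) := by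
          refine setLIntegral_mono' measurableSet_Ioc (fun t ht => ?_)
          have ht0 : 0 < t := ht₁.trans ht.1
          calc ENNReal.ofReal (2*l*Real.exp (2*l*t)) * μ {x | x ∈ Ω' ∧ φ x < ((-t : ℝ) : EReal)}
              ≤ ENNReal.ofReal (2*l*Real.exp (2*l*t)) * ENNReal.ofReal (C * δ ^ (2 * n) *
                  (1 + t ^ p * a) ^ (n - 1) * Real.exp (-(2 * (n:ℝ)) * (t ^ p * a))) :=
                mul_le_mul_right (hsublevel t ht0) _
            _ = ENNReal.ofReal (2*l*Real.exp (2*l*t) * (C * δ ^ (2 * n) *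
                  (1 + t ^ p * a) ^ (n - 1) * Real.exp (-(2 * (n:ℝ)) * (t ^ p * a)))) :=
                (ENNReal.ofReal_mul (by positivity)).symm
            _ ≤ ENNReal.ofReal (K*Real.exp (-(2*κ*(t-t₁)))) := by
                apply ENNReal.ofReal_le_ofReal
                have hXt : X t = t ^ p * a := rfl
                have hpow : (1 + t ^ p * a) ^ (n-1) ≤
                    (1 + 2^(n+1)*A*l^(n+1)/(n:ℝ)^(n+1)) ^ (n-1) := by
                  apply pow_le_pow_left₀ (by positivity)
                  have h6 := hXbound t ht0.le ht.2
                  rw [hXt] at h6; linarith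
                have hE : Real.exp (2*l*t) * Real.exp (-(2 * (n:ℝ)) * (t ^ p * a))
                    = Real.exp (2*l*t - 2*(n:ℝ)*X t) := by
                  rw [← Real.exp_add, hXt]; ring_nf
                have hE2 : Real.exp (2*(l-c)*t₁) * Real.exp (-(2*κ*(t-t₁)))
                    = Real.exp (2*(l-c)*t₁ - 2*κ*(t-t₁)) := by
                  rw [← Real.exp_add]; ring_nf
                calc 2*l*Real.exp (2*l*t) * (C * δ ^ (2 * n) *
                    (1 + t ^ p * a) ^ (n - 1) * Real.exp (-(2 * (n:ℝ)) * (t ^ p * a)))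
                    = (2*l*(C*δ^(2*n))) * ((1 + t ^ p * a) ^ (n - 1) *
                      (Real.exp (2*l*t) * Real.exp (-(2 * (n:ℝ)) * (t ^ p * a)))) := by ring
                  _ = (2*l*(C*δ^(2*n))) * ((1 + t ^ p * a) ^ (n - 1) *
                      Real.exp (2*l*t - 2*(n:ℝ)*X t)) := by rw [hE]
                  _ ≤ (2*l*(C*δ^(2*n))) * ((1 + 2^(n+1)*A*l^(n+1)/(n:ℝ)^(n+1)) ^ (n-1) *
                      Real.exp (2*(l-c)*t₁ - 2*κ*(t-t₁))) := by
                      apply mul_le_mul_of_nonneg_left ?_ (by positivity)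
                      exact mul_le_mul hpow (Real.exp_le_exp.2 (hexp t ht.1.le))
                        (Real.exp_pos _).le (pow_nonneg (by linarith) _)
                  _ = K*Real.exp (-(2*κ*(t-t₁))) := by rw [hKdef, ← hE2]; ring
      _ ≤ ∫⁻ t in Set.Ioi t₁, ENNReal.ofReal (K*Real.exp (-(2*κ*(t-t₁)))) :=
          lintegral_mono_set Set.Ioc_subset_Ioi_self
      _ = ENNReal.ofReal (∫ t in Set.Ioi t₁, K*Real.exp (-(2*κ*(t-t₁)))) := by
          rw [ofReal_integral_eq_lintegral_ofReal
            ((myExpInt2 (2*κ) t₁ hκ2).2.const_mul K)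
            (Filter.Eventually.of_forall (fun t => ?_))]
          have hK0 : 0 ≤ K := by
            apply mul_nonneg (mul_nonneg (by positivity) (pow_nonneg (by linarith) _))
              (Real.exp_pos _).le
          positivity
      _ ≤ ENNReal.ofReal (2 * l * (1 / 2 * C * δ ^ (2 * n) *
          (1 + 2 ^ (n + 1) * A * l ^ (n + 1) / (n : ℝ) ^ (n + 1)) ^ (n - 1) *
          (((n : ℝ) + 1) * c / n - l)⁻¹ *
          Real.exp (2 * (l - c) * A * c ^ n / (n : ℝ) ^ n))) := by
          apply ENNReal.ofReal_le_ofReal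
          rw [MeasureTheory.integral_const_mul, (myExpInt2 (2*κ) t₁ hκ2).1, harg, hKdef]
          have hκinv : (((n : ℝ) + 1) * c / n - l)⁻¹ = κ⁻¹ := by rw [hκdef]
          rw [hκinv]
          rw [show 2*l*(C*δ^(2*n))*(1 + 2^(n+1)*A*l^(n+1)/(n:ℝ)^(n+1))^(n-1)*
            Real.exp (2*(l-c)*t₁)*(1/(2*κ)) = 2*l*(1/2*C*δ^(2*n)*
            (1 + 2^(n+1)*A*l^(n+1)/(n:ℝ)^(n+1))^(n-1)*κ⁻¹*Real.exp (2*(l-c)*t₁)) by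
              field_simp]
  -- Bound 3
  set m : ℝ := l*((n:ℝ)+2)/(n:ℝ)^2 with hmdef
  have hm : 0 < m := by positivity
  set xf : ℝ → ℝ := fun t => t^p*a - l/(n:ℝ)*t with hxfdef
  set xd : ℝ → ℝ := fun t => p*t^(p-1)*a - l/(n:ℝ) with hxddef
  have hhas : ∀ t : ℝ, 0 < t → HasDerivAt xf (xd t) t := by
    intro t ht
    have h1 : HasDerivAt (fun s : ℝ => s^p) (p*t^(p-1)) t :=
      Real.hasDerivAt_rpow_const (Or.inl ht.ne')
    have h2 := (h1.mul_const a).sub ((hasDerivAt_id t).const_mul (l/(n:ℝ)))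
    exact h2.congr_deriv (by simp only [hxddef]; ring)
  have hxdge : ∀ t : ℝ, t₂ ≤ t → m ≤ xd t := by
    intro t h
    have h1 : 2*l/(n:ℝ) ≤ t^(p-1)*a := by
      rw [hpm, ← hu₂]
      exact mul_le_mul_of_nonneg_right (Real.rpow_le_rpow ht₂.le h (by positivity)) ha.le
    have h2 : p*(2*l/(n:ℝ)) ≤ p*(t^(p-1)*a) := mul_le_mul_of_nonneg_left h1 (by linarith)
    have h3 : m = p*(2*l/(n:ℝ)) - l/(n:ℝ) := by
      rw [hmdef, hpdef]; field_simp; ring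
    have h4 : xd t = p*(t^(p-1)*a) - l/(n:ℝ) := by rw [hxddef]; ring
    rw [h4, h3]; linarith
  have hctsOn : ContinuousOn xf (Set.Ioi t₂) :=
    fun t ht => ((hhas t (ht₂.trans ht)).continuousAt).continuousWithinAt
  have hmono : StrictMonoOn xf (Set.Ioi t₂) := by
    apply strictMonoOn_of_deriv_pos (convex_Ioi t₂) hctsOn
    intro t ht
    rw [interior_Ioi] at ht
    rw [(hhas t (ht₂.trans ht)).deriv]
    exact lt_of_lt_of_le hm (hxdge t (le_of_lt ht))
  have hHD : ∀ t ∈ Set.Ioi t₂, HasDerivWithinAt xf (xd t) (Set.Ioi t₂) t :=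
    fun t ht => (hhas t (ht₂.trans ht)).hasDerivWithinAt
  have hxfge : ∀ t : ℝ, t₂ < t → l/(n:ℝ)*t ≤ xf t := by
    intro t ht
    have h2l := hXge t ht.le
    have hXt : X t = t^p*a := rfl
    rw [hXt] at h2l
    have hkey : 2*(l/(n:ℝ)*t) = 2*l/(n:ℝ)*t := by ring
    have hxft : xf t = t^p*a - l/(n:ℝ)*t := rfl
    rw [hxft]
    linarith
  have himg : xf '' Set.Ioi t₂ ⊆ Set.Ioi 0 := by
    rintro y ⟨t, ht, rfl⟩
    have ht' : t₂ < t := ht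
    have h1 := hxfge t ht'
    have h2 : 0 < l/(n:ℝ)*t := by
      have ht0 : 0 < t := ht₂.trans ht'
      positivity
    exact Set.mem_Ioi.2 (lt_of_lt_of_le h2 h1)
  have hgnonneg : ∀ y : ℝ, 0 ≤ y → 0 ≤ (1+2*y)^(n-1)*Real.exp (-(2*(n:ℝ))*y) :=
    fun y hy => mul_nonneg (pow_nonneg (by linarith) _) (Real.exp_pos _).le
  have hInt : IntegrableOn (fun y : ℝ => (1+2*y)^(n-1)*Real.exp (-(2*(n:ℝ))*y)) (Set.Ioi 0) := by
    refine Integrable.mono (exp_neg_integrableOn_Ioi 0 (show (0:ℝ) < 2 by norm_num)) ?_ ?_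
    · exact (((continuous_const.add (continuous_const.mul continuous_id)).pow _).mul
        (Real.continuous_exp.comp (continuous_const.mul continuous_id))).aestronglyMeasurable
    · refine (ae_restrict_iff' measurableSet_Ioi).2 (Filter.Eventually.of_forall (fun y hy => ?_))
      have hy0 : (0:ℝ) < y := hy
      have h1 : 1+2*y ≤ Real.exp (2*y) := by
        have := Real.add_one_le_exp (2*y); linarith
      have h2 : (1+2*y)^(n-1) ≤ Real.exp (2*y)^(n-1) := pow_le_pow_left₀ (by linarith) h1 _
      have h3 : Real.exp (2*y)^(n-1) = Real.exp (((n-1:ℕ):ℝ)*(2*y)) := by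
        rw [← Real.exp_nat_mul]
      have hcast : ((n-1:ℕ):ℝ) = (n:ℝ)-1 := by
        rw [Nat.cast_sub (by omega)]; norm_num
      have h4 : (1+2*y)^(n-1)*Real.exp (-(2*(n:ℝ))*y) ≤ Real.exp (-(2*y)) := by
        calc (1+2*y)^(n-1)*Real.exp (-(2*(n:ℝ))*y)
            ≤ Real.exp (((n:ℝ)-1)*(2*y))*Real.exp (-(2*(n:ℝ))*y) := by
              rw [← hcast, ← h3]
              exact mul_le_mul_of_nonneg_right h2 (Real.exp_pos _).le
          _ = Real.exp (((n:ℝ)-1)*(2*y) + -(2*(n:ℝ))*y) := (Real.exp_add _ _).symm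
          _ = Real.exp (-(2*y)) := by congr 1; ring
      rw [Real.norm_of_nonneg (hgnonneg y hy0.le), Real.norm_of_nonneg (Real.exp_pos _).le]
      calc (1+2*y)^(n-1)*Real.exp (-(2*(n:ℝ))*y) ≤ Real.exp (-(2*y)) := h4
        _ = Real.exp (-2*y) := by ring_nf
  have hae : 0 ≤ᵐ[volume.restrict (Set.Ioi (0:ℝ))]
      fun y : ℝ => (1+2*y)^(n-1)*Real.exp (-(2*(n:ℝ))*y) :=
    (ae_restrict_iff' measurableSet_Ioi).2
      (Filter.Eventually.of_forall (fun y hy => hgnonneg y (le_of_lt hy)))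
  have hIval : 0 ≤ ∫ y in Set.Ioi (0:ℝ), (1+2*y)^(n-1)*Real.exp (-(2*(n:ℝ))*y) :=
    setIntegral_nonneg measurableSet_Ioi (fun y hy => hgnonneg y (le_of_lt hy))
  have hb3 : ∫⁻ t in Set.Ioi t₂,
      ENNReal.ofReal (2*l*Real.exp (2*l*t)) * μ {x | x ∈ Ω' ∧ φ x < ((-t : ℝ) : EReal)} ≤
      ENNReal.ofReal (2 * l * (C * δ ^ (2 * n) * ((n : ℝ) ^ 2 / (l * ((n : ℝ) + 2))) *
        ∫ x in Set.Ioi (0 : ℝ), (1 + 2 * x) ^ (n - 1) * Real.exp (-(2 * (n:ℝ)) * x))) := by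
    calc ∫⁻ t in Set.Ioi t₂,
        ENNReal.ofReal (2*l*Real.exp (2*l*t)) * μ {x | x ∈ Ω' ∧ φ x < ((-t : ℝ) : EReal)}
        ≤ ∫⁻ t in Set.Ioi t₂, ENNReal.ofReal (2*l*(C*δ^(2*n))*m⁻¹) *
            (ENNReal.ofReal |xd t| *
              ENNReal.ofReal ((1+2*xf t)^(n-1)*Real.exp (-(2*(n:ℝ))*xf t))) := by
          refine setLIntegral_mono' measurableSet_Ioi (fun t ht => ?_)
          have htt₂ : t₂ < t := ht
          have ht0 : 0 < t := ht₂.trans htt₂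
          have hxd := hxdge t htt₂.le
          have hxdpos : 0 < xd t := lt_of_lt_of_le hm hxd
          have hxfpos : 0 < xf t := by
            have h1 := hxfge t htt₂
            have h2 : 0 < l/(n:ℝ)*t := by positivity
            exact lt_of_lt_of_le h2 h1
          calc ENNReal.ofReal (2*l*Real.exp (2*l*t)) * μ {x | x ∈ Ω' ∧ φ x < ((-t : ℝ) : EReal)}
              ≤ ENNReal.ofReal (2*l*Real.exp (2*l*t)) * ENNReal.ofReal (C * δ ^ (2 * n) *
                  (1 + t ^ p * a) ^ (n - 1) * Real.exp (-(2 * (n:ℝ)) * (t ^ p * a))) :=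
                mul_le_mul_right (hsublevel t ht0) _
            _ = ENNReal.ofReal (2*l*Real.exp (2*l*t) * (C * δ ^ (2 * n) *
                  (1 + t ^ p * a) ^ (n - 1) * Real.exp (-(2 * (n:ℝ)) * (t ^ p * a)))) :=
                (ENNReal.ofReal_mul (by positivity)).symm
            _ ≤ ENNReal.ofReal ((2*l*(C*δ^(2*n))*m⁻¹) *
                  (|xd t| * ((1+2*xf t)^(n-1)*Real.exp (-(2*(n:ℝ))*xf t)))) := by
                apply ENNReal.ofReal_le_ofReal
                have h2l := hXge t htt₂.le
                have hXt : X t = t^p*a := rfl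
                rw [hXt] at h2l
                have hxft : xf t = t^p*a - l/(n:ℝ)*t := rfl
                have hE : Real.exp (2*l*t) * Real.exp (-(2 * (n:ℝ)) * (t ^ p * a))
                    = Real.exp (-(2*(n:ℝ))*xf t) := by
                  rw [← Real.exp_add, hxft]
                  congr 1
                  field_simp
                  ring
                have hbase : 1 + t^p*a ≤ 1 + 2*xf t := by
                  rw [hxft]
                  have hkey : 2*(l/(n:ℝ)*t) = 2*l/(n:ℝ)*t := by ring
                  linarith
                have hpow3 : (1 + t^p*a)^(n-1) ≤ (1+2*xf t)^(n-1) :=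
                  pow_le_pow_left₀ (by positivity) hbase _
                have honele : (1:ℝ) ≤ m⁻¹ * xd t := by
                  have h5 := mul_le_mul_of_nonneg_left hxd (inv_nonneg.2 hm.le)
                  rwa [inv_mul_cancel₀ hm.ne'] at h5
                have hgxf : 0 ≤ (1+2*xf t)^(n-1)*Real.exp (-(2*(n:ℝ))*xf t) :=
                  hgnonneg (xf t) hxfpos.le
                calc 2*l*Real.exp (2*l*t) * (C * δ ^ (2 * n) *
                    (1 + t ^ p * a) ^ (n - 1) * Real.exp (-(2 * (n:ℝ)) * (t ^ p * a)))
                    = (2*l*(C*δ^(2*n))) * ((1 + t ^ p * a) ^ (n - 1) *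
                      (Real.exp (2*l*t) * Real.exp (-(2 * (n:ℝ)) * (t ^ p * a)))) := by ring
                  _ = (2*l*(C*δ^(2*n))) * ((1 + t ^ p * a) ^ (n - 1) *
                      Real.exp (-(2*(n:ℝ))*xf t)) := by rw [hE]
                  _ ≤ (2*l*(C*δ^(2*n))) * ((1+2*xf t)^(n-1) *
                      Real.exp (-(2*(n:ℝ))*xf t)) := by
                      apply mul_le_mul_of_nonneg_left ?_ (by positivity)
                      exact mul_le_mul_of_nonneg_right hpow3 (Real.exp_pos _).le
                  _ ≤ (2*l*(C*δ^(2*n))) * ((m⁻¹*xd t) * ((1+2*xf t)^(n-1) *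
                      Real.exp (-(2*(n:ℝ))*xf t))) := by
                      apply mul_le_mul_of_nonneg_left ?_ (by positivity)
                      nth_rewrite 1 [← one_mul ((1+2*xf t)^(n-1) * Real.exp (-(2*(n:ℝ))*xf t))]
                      exact mul_le_mul_of_nonneg_right honele hgxf
                  _ = (2*l*(C*δ^(2*n))*m⁻¹) *
                      (|xd t| * ((1+2*xf t)^(n-1)*Real.exp (-(2*(n:ℝ))*xf t))) := by
                      rw [abs_of_pos hxdpos]; ring
            _ = ENNReal.ofReal (2*l*(C*δ^(2*n))*m⁻¹) *
                  (ENNReal.ofReal |xd t| *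
                    ENNReal.ofReal ((1+2*xf t)^(n-1)*Real.exp (-(2*(n:ℝ))*xf t))) := by
                rw [ENNReal.ofReal_mul (by positivity), ENNReal.ofReal_mul (abs_nonneg _)]
      _ = ENNReal.ofReal (2*l*(C*δ^(2*n))*m⁻¹) *
            ∫⁻ t in Set.Ioi t₂, ENNReal.ofReal |xd t| *
              ENNReal.ofReal ((1+2*xf t)^(n-1)*Real.exp (-(2*(n:ℝ))*xf t)) :=
          lintegral_const_mul' _ _ ENNReal.ofReal_ne_top
      _ = ENNReal.ofReal (2*l*(C*δ^(2*n))*m⁻¹) *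
            ∫⁻ y in xf '' Set.Ioi t₂,
              ENNReal.ofReal ((1+2*y)^(n-1)*Real.exp (-(2*(n:ℝ))*y)) := by
          congr 1
          exact (myLintegralImage measurableSet_Ioi hHD hmono.injOn
            (fun y => ENNReal.ofReal ((1+2*y)^(n-1)*Real.exp (-(2*(n:ℝ))*y)))).symm
      _ ≤ ENNReal.ofReal (2*l*(C*δ^(2*n))*m⁻¹) *
            ∫⁻ y in Set.Ioi (0:ℝ),
              ENNReal.ofReal ((1+2*y)^(n-1)*Real.exp (-(2*(n:ℝ))*y)) :=
          mul_le_mul_right (lintegral_mono_set himg) _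
      _ = ENNReal.ofReal (2*l*(C*δ^(2*n))*m⁻¹) *
            ENNReal.ofReal (∫ y in Set.Ioi (0:ℝ), (1+2*y)^(n-1)*Real.exp (-(2*(n:ℝ))*y)) := by
          rw [← ofReal_integral_eq_lintegral_ofReal hInt hae]
      _ = ENNReal.ofReal (2 * l * (C * δ ^ (2 * n) * ((n : ℝ) ^ 2 / (l * ((n : ℝ) + 2))) *
            ∫ x in Set.Ioi (0 : ℝ), (1 + 2 * x) ^ (n - 1) * Real.exp (-(2 * (n:ℝ)) * x))) := by
          rw [← ENNReal.ofReal_mul (by positivity)]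
          congr 1
          rw [hmdef]
          field_simp
  -- combine
  conv_lhs => rw [hsplit]
  refine le_trans (lintegral_union_le _ _ _)
    (le_trans (add_le_add_left (lintegral_union_le _ _ _) _) ?_)
  refine le_trans (add_le_add (add_le_add hb1 hb2) hb3) ?_
  have hT1 : (0:ℝ) ≤ 2 * l * (B / (2 * (l - c)) *
      Real.exp (2 * (l - c) * A * c ^ n / (n : ℝ) ^ n)) := by
    apply mul_nonneg (by positivity)
    exact mul_nonneg (div_nonneg hB.le (by linarith)) (Real.exp_pos _).le
  have hT2 : (0:ℝ) ≤ 2 * l * (1 / 2 * C * δ ^ (2 * n) *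
      (1 + 2 ^ (n + 1) * A * l ^ (n + 1) / (n : ℝ) ^ (n + 1)) ^ (n - 1) *
      (((n : ℝ) + 1) * c / n - l)⁻¹ *
      Real.exp (2 * (l - c) * A * c ^ n / (n : ℝ) ^ n)) := by
    apply mul_nonneg (by positivity)
    apply mul_nonneg (mul_nonneg (mul_nonneg (by positivity)
      (pow_nonneg (by linarith) _)) (inv_nonneg.2 hκ.le)) (Real.exp_pos _).le
  have hT3 : (0:ℝ) ≤ 2 * l * (C * δ ^ (2 * n) * ((n : ℝ) ^ 2 / (l * ((n : ℝ) + 2))) *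
      ∫ x in Set.Ioi (0 : ℝ), (1 + 2 * x) ^ (n - 1) * Real.exp (-(2 * (n:ℝ)) * x)) := by
    apply mul_nonneg (by positivity)
    exact mul_nonneg (by positivity) hIval
  rw [← ENNReal.ofReal_add hT1 hT2, ← ENNReal.ofReal_add (by linarith) hT3]
  apply ENNReal.ofReal_le_ofReal
  apply le_of_eq
  ring
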